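/- For ω > 0, the matrix A := A^{(p;ω)}_{(𝒥)} has all diagonal entries nonnegative, strictly positive maximal diagonal entry c := max_{a∈[n]} A_{aa} > 0, and all off-diagonal entries nonpositive; consequently the Metropolis matrix 𝓜^{(p)}_{(𝒥)} := I − c^{−1} A belongs to ⟨p⟩^+, does not depend on ω, and has at least one diagonal entry equal to zero (so it lies in the boundary of ⟨p⟩^+). -/

import Mathlib

open Matrix

/-- The ratio `r_j := p_j / p_n` for `j ∈ [n-1]`, with the state space `[n]` modeled as
`Fin (m+1)`, the last state `n` as `Fin.last m`, and `[n-1]` as `Fin m` via `Fin.castSucc`. -/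
noncomputable def r (m : ℕ) (p : Fin (m + 1) → ℝ) (j : Fin m) : ℝ :=
  p j.castSucc / p (Fin.last m)

/-- `e^{(p)}_{(j,k)} := (e_j − r_j e_n)(e_k^T − e_n^T)` as an `(m+1) × (m+1)` real matrix. -/
noncomputable def Ep (m : ℕ) (p : Fin (m + 1) → ℝ) (j k : Fin m) :
    Matrix (Fin (m + 1)) (Fin (m + 1)) ℝ :=
  Matrix.vecMulVec
    (fun a => (if a = j.castSucc then (1 : ℝ) else 0) -
      r m p j * (if a = Fin.last m then (1 : ℝ) else 0))
    (fun b => (if b = k.castSucc then (1 : ℝ) else 0) - (if b = Fin.last m then (1 : ℝ) else 0))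

/-- For a `d`-element subset `𝒥 = {j_1, …, j_d} ⊆ [n-1]` (given as an injective tuple
`J : Fin d → Fin m`) and a `d × d` matrix `μ`, the `n × n` matrix
`μ^{(p)}_{(𝒥)} := Σ_{u,v} μ_{uv} e^{(p)}_{(j_u, j_v)}`. -/
noncomputable def liftJ (m d : ℕ) (p : Fin (m + 1) → ℝ) (J : Fin d → Fin m)
    (μ : Matrix (Fin d) (Fin d) ℝ) : Matrix (Fin (m + 1)) (Fin (m + 1)) ℝ :=
  ∑ u, ∑ v, μ u v • Ep m p (J u) (J v)

/-- The matrix `A^{(p;ω)}_{(𝒥)} := ω Σ_{u,v} (δ_{j_u j_v} − r_{j_v}/(1 + r_{(𝒥)} 1_d))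
e^{(p)}_{(j_u, j_v)}`. -/
noncomputable def AJ (m d : ℕ) (p : Fin (m + 1) → ℝ) (J : Fin d → Fin m) (ω : ℝ) :
    Matrix (Fin (m + 1)) (Fin (m + 1)) ℝ :=
  ω • ∑ u, ∑ v,
    ((if J u = J v then (1 : ℝ) else 0) - r m p (J v) / (1 + ∑ w, r m p (J w))) •
      Ep m p (J u) (J v)

/-- The largest diagonal entry `c = max_{a} (A^{(p;ω)}_{(𝒥)})_{aa}`. -/
noncomputable def cdiag (m d : ℕ) (p : Fin (m + 1) → ℝ) (J : Fin d → Fin m) (ω : ℝ) : ℝ :=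
  Finset.univ.sup' Finset.univ_nonempty (fun a => AJ m d p J ω a a)

/-- for `ω > 0`, `A := A^{(p;ω)}_{(𝒥)}` has nonnegative diagonal entries,
strictly positive maximal diagonal entry `c`, and nonpositive off-diagonal entries;
consequently the Metropolis matrix `𝓜^{(p)}_{(𝒥)} := I − c⁻¹ A` lies in `⟨p⟩⁺`, does not
depend on `ω`, and has a vanishing diagonal entry (so it lies in `∂⟨p⟩⁺`). -/
-- helper vectors
noncomputable def Uf (m d : ℕ) (p : Fin (m + 1) → ℝ) (J : Fin d → Fin m)
    (u : Fin d) (a : Fin (m + 1)) : ℝ :=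
  (if a = (J u).castSucc then (1 : ℝ) else 0) -
    r m p (J u) * (if a = Fin.last m then (1 : ℝ) else 0)

noncomputable def Vf (m d : ℕ) (J : Fin d → Fin m) (v : Fin d) (b : Fin (m + 1)) : ℝ :=
  (if b = (J v).castSucc then (1 : ℝ) else 0) - (if b = Fin.last m then (1 : ℝ) else 0)

lemma Ep_apply (m : ℕ) (p : Fin (m+1) → ℝ) (d : ℕ) (J : Fin d → Fin m) (u v : Fin d)
    (a b : Fin (m+1)) :
    Ep m p (J u) (J v) a b = Uf m d p J u a * Vf m d J v b := rfl

lemma AJ_apply (m d : ℕ) (p : Fin (m + 1) → ℝ) (J : Fin d → Fin m)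
    (hJ : Function.Injective J) (ω : ℝ) (a b : Fin (m + 1)) :
    AJ m d p J ω a b =
      ω * ((∑ u, Uf m d p J u a * Vf m d J u b) -
        (∑ u, Uf m d p J u a) * (∑ v, r m p (J v) * Vf m d J v b) /
          (1 + ∑ w, r m p (J w))) := by
  simp only [AJ, Matrix.smul_apply, Matrix.sum_apply, smul_eq_mul, Ep_apply m p d J,
    hJ.eq_iff]
  congr 1
  rw [Finset.sum_mul, Finset.sum_div, ← Finset.sum_sub_distrib]
  refine Finset.sum_congr rfl fun u _ => ?_
  simp only [sub_mul, Finset.sum_sub_distrib, ite_mul, one_mul, zero_mul,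
    Finset.sum_ite_eq, Finset.mem_univ, if_true]
  congr 1
  rw [Finset.mul_sum, Finset.sum_div]
  exact Finset.sum_congr rfl fun v _ => by ring

section eval
variable {m d : ℕ} (p : Fin (m + 1) → ℝ) {J : Fin d → Fin m}

lemma Uf_J (hJ : Function.Injective J) (u u0 : Fin d) :
    Uf m d p J u ((J u0).castSucc) = if u = u0 then 1 else 0 := by
  simp [Uf, (Fin.castSucc_lt_last _).ne, Fin.castSucc_inj, hJ.eq_iff, eq_comm]

lemma Uf_last (u : Fin d) : Uf m d p J u (Fin.last m) = -(r m p (J u)) := by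
  simp [Uf, (Fin.castSucc_lt_last _).ne']

lemma Uf_notin {k : Fin m} (hk : ∀ u, J u ≠ k) (u : Fin d) :
    Uf m d p J u k.castSucc = 0 := by
  simp [Uf, (Fin.castSucc_lt_last _).ne, Fin.castSucc_inj, fun u => (hk u).symm, eq_comm]

lemma Vf_J (hJ : Function.Injective J) (v v0 : Fin d) :
    Vf m d J v ((J v0).castSucc) = if v = v0 then 1 else 0 := by
  simp [Vf, (Fin.castSucc_lt_last _).ne, Fin.castSucc_inj, hJ.eq_iff, eq_comm]

lemma Vf_last (v : Fin d) : Vf m d J v (Fin.last m) = -1 := by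
  simp [Vf, (Fin.castSucc_lt_last _).ne']

lemma Vf_notin {k : Fin m} (hk : ∀ u, J u ≠ k) (v : Fin d) :
    Vf m d J v k.castSucc = 0 := by
  simp [Vf, (Fin.castSucc_lt_last _).ne, Fin.castSucc_inj, fun u => (hk u).symm, eq_comm]

lemma sum_ind (u0 : Fin d) (g : Fin d → ℝ) :
    ∑ u, (if u = u0 then (1:ℝ) else 0) * g u = g u0 := by
  simp [ite_mul]

end eval

section entries
variable {m d : ℕ} (p : Fin (m + 1) → ℝ) {J : Fin d → Fin m}

lemma AJ_JJ (hJ : Function.Injective J) (ω : ℝ) (u0 v0 : Fin d) :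
    AJ m d p J ω ((J u0).castSucc) ((J v0).castSucc) =
      ω * ((if u0 = v0 then 1 else 0) - r m p (J v0) / (1 + ∑ w, r m p (J w))) := by
  rw [AJ_apply m d p J hJ]
  congr 1
  simp only [Uf_J p hJ, Vf_J hJ, sum_ind, mul_ite, mul_one, mul_zero,
    Finset.sum_ite_eq', Finset.mem_univ, if_true, ite_mul, one_mul, zero_mul]
  by_cases h : u0 = v0
  · simp [h]
  · simp [h, Ne.symm h]

lemma AJ_Jlast (hJ : Function.Injective J) (ω : ℝ)
    (hS : (1:ℝ) + ∑ w, r m p (J w) ≠ 0) (u0 : Fin d) :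
    AJ m d p J ω ((J u0).castSucc) (Fin.last m) =
      -(ω / (1 + ∑ w, r m p (J w))) := by
  rw [AJ_apply m d p J hJ]
  simp only [Uf_J p hJ, Vf_last, sum_ind, mul_neg_one, Finset.sum_neg_distrib,
    Finset.sum_ite_eq', Finset.mem_univ, if_true, ite_mul, one_mul, zero_mul]
  field_simp
  ring

lemma AJ_lastJ (hJ : Function.Injective J) (ω : ℝ)
    (hS : (1:ℝ) + ∑ w, r m p (J w) ≠ 0) (v0 : Fin d) :
    AJ m d p J ω (Fin.last m) ((J v0).castSucc) =
      -(ω * r m p (J v0) / (1 + ∑ w, r m p (J w))) := by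
  rw [AJ_apply m d p J hJ]
  simp only [Uf_last, Vf_J hJ, mul_ite, ite_mul, mul_one, mul_zero, neg_mul,
    Finset.sum_neg_distrib, Finset.sum_ite_eq', Finset.mem_univ, if_true]
  field_simp
  ring

lemma AJ_lastlast (hJ : Function.Injective J) (ω : ℝ)
    (hS : (1:ℝ) + ∑ w, r m p (J w) ≠ 0) :
    AJ m d p J ω (Fin.last m) (Fin.last m) =
      ω * (∑ w, r m p (J w)) / (1 + ∑ w, r m p (J w)) := by
  rw [AJ_apply m d p J hJ]
  simp only [Uf_last, Vf_last, mul_neg_one, neg_neg, mul_neg, Finset.sum_neg_distrib, neg_mul]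
  field_simp
  ring_nf

lemma AJ_rowzero (hJ : Function.Injective J) (ω : ℝ) {k : Fin m} (hk : ∀ u, J u ≠ k)
    (b : Fin (m+1)) : AJ m d p J ω k.castSucc b = 0 := by
  rw [AJ_apply m d p J hJ]
  simp [Uf_notin p hk]

lemma AJ_colzero (hJ : Function.Injective J) (ω : ℝ) {k : Fin m} (hk : ∀ u, J u ≠ k)
    (a : Fin (m+1)) : AJ m d p J ω a k.castSucc = 0 := by
  rw [AJ_apply m d p J hJ]
  simp [Vf_notin hk]

end entries

section structural
variable {m d : ℕ} (p : Fin (m + 1) → ℝ) (J : Fin d → Fin m) (ω : ℝ)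

lemma AJ_mulVec_one : AJ m d p J ω *ᵥ (fun _ => (1:ℝ)) = 0 := by
  ext a
  simp only [AJ, mulVec, dotProduct, Matrix.smul_apply, Matrix.sum_apply, smul_eq_mul,
    mul_one, Pi.zero_apply, Ep, vecMulVec_apply]
  rw [← Finset.mul_sum, Finset.sum_comm]
  rw [Finset.sum_eq_zero, mul_zero]
  intro u _
  rw [Finset.sum_comm]
  refine Finset.sum_eq_zero fun v _ => ?_
  rw [← Finset.mul_sum, ← Finset.mul_sum]
  have : ∑ b : Fin (m+1),
      ((if b = (J v).castSucc then (1:ℝ) else 0) - if b = Fin.last m then 1 else 0) = 0 := by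
    simp [Finset.sum_sub_distrib]
  rw [this, mul_zero, mul_zero]

lemma AJ_vecMul_p (hp : ∀ a, 0 < p a) : Matrix.vecMul p (AJ m d p J ω) = 0 := by
  ext b
  simp only [AJ, vecMul, dotProduct, Matrix.smul_apply, Matrix.sum_apply, smul_eq_mul,
    Pi.zero_apply, Ep, vecMulVec_apply]
  have key : ∀ u : Fin d, ∑ a : Fin (m+1),
      p a * ((if a = (J u).castSucc then (1:ℝ) else 0) -
        r m p (J u) * (if a = Fin.last m then 1 else 0)) = 0 := by
    intro u
    simp only [mul_sub, Finset.sum_sub_distrib, mul_ite, mul_one, mul_zero,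
      Finset.sum_ite_eq', Finset.mem_univ, if_true]
    rw [r, mul_div_assoc', mul_comm, mul_div_assoc, div_self (hp (Fin.last m)).ne', mul_one,
      sub_self]
  have key2 : ∀ (C D : ℝ) (u : Fin d), ∑ a : Fin (m+1),
      p a * (ω * (C * (((if a = (J u).castSucc then (1:ℝ) else 0) -
        r m p (J u) * (if a = Fin.last m then 1 else 0)) * D))) = 0 := by
    intro C D u
    calc ∑ a : Fin (m+1), p a * (ω * (C * (((if a = (J u).castSucc then (1:ℝ) else 0) -
          r m p (J u) * (if a = Fin.last m then 1 else 0)) * D)))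
        = (ω * C * D) * ∑ a : Fin (m+1), p a * ((if a = (J u).castSucc then (1:ℝ) else 0) -
          r m p (J u) * (if a = Fin.last m then 1 else 0)) := by
          rw [Finset.mul_sum]; exact Finset.sum_congr rfl fun a _ => by ring
      _ = 0 := by rw [key u, mul_zero]
  simp only [Finset.mul_sum]
  rw [Finset.sum_comm]
  refine Finset.sum_eq_zero fun u _ => ?_
  rw [Finset.sum_comm]
  exact Finset.sum_eq_zero fun v _ => key2 _ _ u

lemma AJ_smul_one : AJ m d p J ω = ω • AJ m d p J 1 := by
  rw [AJ, AJ, one_smul]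

end structural

section main
variable {m d : ℕ} (p : Fin (m + 1) → ℝ) {J : Fin d → Fin m}

lemma cdiag_smul {ω : ℝ} (hω : 0 < ω) :
    cdiag m d p J ω = ω * cdiag m d p J 1 := by
  refine le_antisymm (Finset.sup'_le _ _ fun a _ => ?_) ?_
  · rw [AJ_smul_one, Matrix.smul_apply, smul_eq_mul]
    exact mul_le_mul_of_nonneg_left (Finset.le_sup' (fun a => AJ m d p J 1 a a)
      (Finset.mem_univ a)) hω.le
  · obtain ⟨a, -, ha⟩ := Finset.exists_mem_eq_sup' (Finset.univ_nonempty)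
      (fun a => AJ m d p J 1 a a)
    rw [cdiag, ha, ← smul_eq_mul, ← Matrix.smul_apply, ← AJ_smul_one]
    exact Finset.le_sup' (fun a => AJ m d p J ω a a) (Finset.mem_univ a)

end main

theorem stmt17 (m d : ℕ) (hm : 1 ≤ m) (hd : 1 ≤ d) (p : Fin (m + 1) → ℝ)
    (hp : ∀ a, 0 < p a) (hsum : ∑ a, p a = 1)
    (J : Fin d → Fin m) (hJ : Function.Injective J) (ω : ℝ) (hω : 0 < ω) :
    (∀ a, 0 ≤ AJ m d p J ω a a) ∧
    0 < cdiag m d p J ω ∧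
    (∀ a b, a ≠ b → AJ m d p J ω a b ≤ 0) ∧
    (∀ a b, 0 ≤ ((1 : Matrix (Fin (m + 1)) (Fin (m + 1)) ℝ) -
      (cdiag m d p J ω)⁻¹ • AJ m d p J ω) a b) ∧
    ((1 : Matrix (Fin (m + 1)) (Fin (m + 1)) ℝ) -
      (cdiag m d p J ω)⁻¹ • AJ m d p J ω).mulVec (fun _ => (1 : ℝ)) = (fun _ => (1 : ℝ)) ∧
    Matrix.vecMul p ((1 : Matrix (Fin (m + 1)) (Fin (m + 1)) ℝ) -
      (cdiag m d p J ω)⁻¹ • AJ m d p J ω) = p ∧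
    (∀ ω' : ℝ, 0 < ω' →
      (1 : Matrix (Fin (m + 1)) (Fin (m + 1)) ℝ) - (cdiag m d p J ω')⁻¹ • AJ m d p J ω' =
        (1 : Matrix (Fin (m + 1)) (Fin (m + 1)) ℝ) - (cdiag m d p J ω)⁻¹ • AJ m d p J ω) ∧
    (∃ a, ((1 : Matrix (Fin (m + 1)) (Fin (m + 1)) ℝ) -
      (cdiag m d p J ω)⁻¹ • AJ m d p J ω) a a = 0) := by
  haveI : Nonempty (Fin d) := ⟨⟨0, hd⟩⟩
  have hr : ∀ j, 0 < r m p j := fun j => div_pos (hp _) (hp _)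
  have hsumr : 0 < ∑ w, r m p (J w) :=
    Finset.sum_pos (fun w _ => hr _) Finset.univ_nonempty
  have hS0 : (0:ℝ) < 1 + ∑ w, r m p (J w) := by linarith
  have hS : (1:ℝ) + ∑ w, r m p (J w) ≠ 0 := hS0.ne'
  have hrS : ∀ v, r m p (J v) < 1 + ∑ w, r m p (J w) := by
    intro v
    have : r m p (J v) ≤ ∑ w, r m p (J w) :=
      Finset.single_le_sum (fun w _ => (hr (J w)).le) (Finset.mem_univ v)
    linarith
  -- diagonal nonneg
  have hdiag : ∀ a, 0 ≤ AJ m d p J ω a a := by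
    intro a
    induction a using Fin.lastCases with
    | last =>
        rw [AJ_lastlast p hJ ω hS]
        positivity
    | cast k =>
        by_cases hk : ∃ u, J u = k
        · obtain ⟨u0, rfl⟩ := hk
          rw [AJ_JJ p hJ ω u0 u0, if_pos rfl]
          have := hrS u0
          have h1 : r m p (J u0) / (1 + ∑ w, r m p (J w)) ≤ 1 :=
            (div_le_one hS0).mpr this.le
          nlinarith
        · push_neg at hk
          rw [AJ_rowzero p hJ ω hk]
  -- positive max
  have hclast : 0 < AJ m d p J ω (Fin.last m) (Fin.last m) := by
    rw [AJ_lastlast p hJ ω hS]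
    positivity
  have hc : 0 < cdiag m d p J ω :=
    lt_of_lt_of_le hclast (Finset.le_sup' (fun a => AJ m d p J ω a a) (Finset.mem_univ _))
  -- off-diagonal nonpos
  have hoff : ∀ a b, a ≠ b → AJ m d p J ω a b ≤ 0 := by
    intro a b hab
    induction a using Fin.lastCases with
    | last =>
        induction b using Fin.lastCases with
        | last => exact absurd rfl hab
        | cast k =>
            by_cases hk : ∃ v, J v = k
            · obtain ⟨v0, rfl⟩ := hk
              rw [AJ_lastJ p hJ ω hS v0]
              have h1 : 0 ≤ ω * r m p (J v0) / (1 + ∑ w, r m p (J w)) := by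
                have := (hr (J v0)).le
                positivity
              linarith
            · push_neg at hk
              rw [AJ_colzero p hJ ω hk]
    | cast k =>
        by_cases hk : ∃ u, J u = k
        · obtain ⟨u0, rfl⟩ := hk
          induction b using Fin.lastCases with
          | last =>
              rw [AJ_Jlast p hJ ω hS u0]
              have h1 : 0 ≤ ω / (1 + ∑ w, r m p (J w)) := by positivity
              linarith
          | cast k' =>
              by_cases hk' : ∃ v, J v = k'
              · obtain ⟨v0, rfl⟩ := hk'
                rw [AJ_JJ p hJ ω u0 v0]
                have huv : u0 ≠ v0 := by
                  rintro rfl; exact hab rfl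
                rw [if_neg huv]
                have h1 : 0 ≤ r m p (J v0) / (1 + ∑ w, r m p (J w)) := by
                  have := (hr (J v0)).le
                  positivity
                nlinarith
              · push_neg at hk'
                rw [AJ_colzero p hJ ω hk']
        · push_neg at hk
          rw [AJ_rowzero p hJ ω hk]
  -- M entries nonneg
  have hM : ∀ a b, 0 ≤ ((1 : Matrix (Fin (m + 1)) (Fin (m + 1)) ℝ) -
      (cdiag m d p J ω)⁻¹ • AJ m d p J ω) a b := by
    intro a b
    rw [Matrix.sub_apply, Matrix.smul_apply, smul_eq_mul]
    by_cases hab : a = b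
    · subst hab
      rw [Matrix.one_apply_eq, sub_nonneg]
      have h1 := Finset.le_sup' (fun a => AJ m d p J ω a a) (Finset.mem_univ a)
      calc (cdiag m d p J ω)⁻¹ * AJ m d p J ω a a
          ≤ (cdiag m d p J ω)⁻¹ * cdiag m d p J ω :=
            mul_le_mul_of_nonneg_left h1 (inv_nonneg.mpr hc.le)
        _ = 1 := inv_mul_cancel₀ hc.ne'
    · rw [Matrix.one_apply_ne hab]
      have h1 : AJ m d p J ω a b ≤ 0 := hoff a b hab
      have h2 : (cdiag m d p J ω)⁻¹ * AJ m d p J ω a b ≤ 0 :=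
        mul_nonpos_of_nonneg_of_nonpos (inv_nonneg.mpr hc.le) h1
      linarith
  -- mulVec one
  have hrow : ∀ ω'' : ℝ, ((1 : Matrix (Fin (m + 1)) (Fin (m + 1)) ℝ) -
      (cdiag m d p J ω'')⁻¹ • AJ m d p J ω'').mulVec (fun _ => (1 : ℝ)) = (fun _ => (1 : ℝ)) := by
    intro ω''
    rw [Matrix.sub_mulVec, Matrix.one_mulVec, Matrix.smul_mulVec, AJ_mulVec_one,
      smul_zero]
    ext a
    simp
  -- vecMul p
  have hcol : ∀ ω'' : ℝ, Matrix.vecMul p ((1 : Matrix (Fin (m + 1)) (Fin (m + 1)) ℝ) -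
      (cdiag m d p J ω'')⁻¹ • AJ m d p J ω'') = p := by
    intro ω''
    have hsmul : ∀ (c : ℝ) (A : Matrix (Fin (m+1)) (Fin (m+1)) ℝ),
        p ᵥ* (c • A) = c • (p ᵥ* A) := by
      intro c A
      ext b
      simp [Matrix.vecMul, dotProduct, Finset.mul_sum, mul_left_comm]
    rw [Matrix.vecMul_sub, Matrix.vecMul_one, hsmul, AJ_vecMul_p p J ω'' hp,
      smul_zero, sub_zero]
  -- omega independence
  have hindep : ∀ ω' : ℝ, 0 < ω' →
      (1 : Matrix (Fin (m + 1)) (Fin (m + 1)) ℝ) - (cdiag m d p J ω')⁻¹ • AJ m d p J ω' =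
      (1 : Matrix (Fin (m + 1)) (Fin (m + 1)) ℝ) -
        (cdiag m d p J 1)⁻¹ • AJ m d p J 1 := by
    intro ω' hω'
    rw [cdiag_smul p hω', AJ_smul_one p J ω', smul_smul, mul_inv, mul_comm ω'⁻¹, mul_assoc,
      inv_mul_cancel₀ hω'.ne', mul_one]
  -- vanishing diagonal
  have hvan : ∃ a, ((1 : Matrix (Fin (m + 1)) (Fin (m + 1)) ℝ) -
      (cdiag m d p J ω)⁻¹ • AJ m d p J ω) a a = 0 := by
    obtain ⟨a, -, ha⟩ := Finset.exists_mem_eq_sup' (Finset.univ_nonempty)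
      (fun a => AJ m d p J ω a a)
    refine ⟨a, ?_⟩
    have ha' : cdiag m d p J ω = AJ m d p J ω a a := ha
    rw [Matrix.sub_apply, Matrix.smul_apply, smul_eq_mul, Matrix.one_apply_eq, ← ha',
      inv_mul_cancel₀ hc.ne', sub_self]
  exact ⟨hdiag, hc, hoff, hM, hrow ω, hcol ω,
    fun ω' hω' => (hindep ω' hω').trans (hindep ω hω).symm, hvan⟩
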